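/- Let ⟨A,m⟩ be a monotonic distributive semilattice. Then: (1) m1 = 1 iff ∅ ∉ R_m(P) for every irreducible filter P; (2) for all a, ma ≤ a iff for every irreducible filter P, the special saturated set α(Pᶜ) = {Q ∈ X(A) : Q ∩ Pᶜ = ∅} belongs to R_m(P); (3) for all a, a ≤ ma iff for every irreducible filter P and every Z ∈ R_m(P), P ∈ Z. -/
import Mathlib


namespace DS

variable {A : Type*} [SemilatticeInf A] [OrderTop A]

/-- A filter: an upset containing the top element, closed under meets. -/
def IsFilt (F : Set A) : Prop :=
  IsUpperSet F ∧ ⊤ ∈ F ∧ ∀ ⦃a b : A⦄, a ∈ F → b ∈ F → a ⊓ b ∈ F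

/-- An irreducible (prime) filter: a proper filter that is meet-irreducible
among filters. -/
def IsIrred (F : Set A) : Prop :=
  IsFilt F ∧ F ≠ Set.univ ∧
    ∀ F₁ F₂ : Set A, IsFilt F₁ → IsFilt F₂ → F = F₁ ∩ F₂ → F = F₁ ∨ F = F₂

/-- An order ideal: a downset in which every pair of elements has an upper
bound in the set. -/
def IsOrdIdeal (I : Set A) : Prop :=
  IsLowerSet I ∧ ∀ a ∈ I, ∀ b ∈ I, ∃ c ∈ I, a ≤ c ∧ b ≤ c

/-- Distributivity for a meet-semilattice with top. -/
def IsDistrib (A : Type*) [SemilatticeInf A] [OrderTop A] : Prop :=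
  ∀ a b c : A, a ⊓ b ≤ c → ∃ a₁ b₁ : A, a ≤ a₁ ∧ b ≤ b₁ ∧ c = a₁ ⊓ b₁

/-- The set of irreducible filters of `A`, ordered by inclusion. -/
def Spec (A : Type*) [SemilatticeInf A] [OrderTop A] : Type _ :=
  {P : Set A // IsIrred P}

instance : PartialOrder (Spec A) := Subtype.partialOrder _

/-- `beta a` = the set of irreducible filters containing `a`. -/
def beta (a : A) : Set (Spec A) := {P : Spec A | a ∈ P.1}

/-- The topology on `Spec A` generated by the basis `{beta aᶜ : a ∈ A}`. -/
def specTop (A : Type*) [SemilatticeInf A] [OrderTop A] : TopologicalSpace (Spec A) :=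
  TopologicalSpace.generateFrom {s : Set (Spec A) | ∃ a : A, s = (beta a)ᶜ}

/-- Special basic saturated subsets: intersections of dually directed families
of basic opens `beta aᶜ`. -/
def SBS (Z : Set (Spec A)) : Prop :=
  ∃ L : Set A, (∀ a ∈ L, ∀ b ∈ L, ∃ c ∈ L, beta a ∪ beta b ⊆ beta c) ∧
    Z = ⋂ a ∈ L, (beta a)ᶜ

/-- The order ideal associated to a special basic saturated set. -/
def IA (Z : Set (Spec A)) : Set A := {a : A | beta a ∩ Z = ∅}

/-- The special basic saturated set associated to an order ideal. -/
def alphaI (I : Set A) : Set (Spec A) := {P : Spec A | P.1 ∩ I = ∅}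

/-- The filter associated to a closed set. -/
def FY (Y : Set (Spec A)) : Set A := {a : A | Y ⊆ beta a}

/-- The multirelation `R_m` on the dual space. -/
def Rm (m : A → A) (P : Spec A) (Z : Set (Spec A)) : Prop :=
  {a : A | m a ∈ P.1} ∩ IA Z = ∅

/-- The multirelation `G_m` on the dual space. -/
def Gm (m : A → A) (P : Spec A) (Y : Set (Spec A)) : Prop :=
  FY Y ⊆ {a : A | m a ∈ P.1}

/-- The composed relation `R_m²`. -/
def Rm2 (m : A → A) (P : Spec A) (Z : Set (Spec A)) : Prop :=
  ∃ S : Set (Spec A), SBS S ∧ Rm m P S ∧ ∀ x ∈ S, Rm m x Z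

end DS

open DS Set

section Aux

open DS Set

variable {A : Type*} [SemilatticeInf A] [OrderTop A]

/-- Prime filter separation theorem for distributive semilattices. -/
lemma prime_sep (hA : IsDistrib A) {F I : Set A} (hF : IsFilt F)
    (hI : IsOrdIdeal I) (hdisj : ∀ x ∈ F, x ∉ I) (hne : I.Nonempty) :
    ∃ P : Set A, IsIrred P ∧ F ⊆ P ∧ ∀ x ∈ P, x ∉ I := by
  classical
  set S : Set (Set A) := {G | IsFilt G ∧ F ⊆ G ∧ ∀ x ∈ G, x ∉ I} with hS
  have hchain : ∀ c ⊆ S, IsChain (· ⊆ ·) c → c.Nonempty →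
      ∃ ub ∈ S, ∀ s ∈ c, s ⊆ ub := by
    rintro c hcS hchain ⟨G0, hG0⟩
    refine ⟨⋃₀ c, ⟨⟨?_, ?_, ?_⟩, ?_, ?_⟩, fun s hs => subset_sUnion_of_mem hs⟩
    · intro x y hxy hx
      obtain ⟨G, hG, hxG⟩ := hx
      exact ⟨G, hG, (hcS hG).1.1 hxy hxG⟩
    · exact ⟨G0, hG0, (hcS hG0).1.2.1⟩
    · intro x y hx hy
      obtain ⟨G1, hG1, hx1⟩ := hx
      obtain ⟨G2, hG2, hy2⟩ := hy
      rcases hchain.total hG1 hG2 with h | h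
      · exact ⟨G2, hG2, (hcS hG2).1.2.2 (h hx1) hy2⟩
      · exact ⟨G1, hG1, (hcS hG1).1.2.2 hx1 (h hy2)⟩
    · exact (hcS hG0).2.1.trans (subset_sUnion_of_mem hG0)
    · rintro x ⟨G, hG, hxG⟩ hxI
      exact (hcS hG).2.2 x hxG hxI
  obtain ⟨P, hFP, hPmax⟩ := zorn_subset_nonempty S hchain F ⟨hF, subset_rfl, hdisj⟩
  obtain ⟨hPfilt, hFsub, hPdisj⟩ := hPmax.prop
  refine ⟨P, ⟨hPfilt, ?_, ?_⟩, hFsub, hPdisj⟩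
  · intro hPuniv
    obtain ⟨b, hb⟩ := hne
    exact hPdisj b (hPuniv ▸ mem_univ b) hb
  · intro F₁ F₂ hF₁ hF₂ hPeq
    by_contra hcon
    push_neg at hcon
    obtain ⟨hne₁, hne₂⟩ := hcon
    have hsub₁ : P ⊆ F₁ := hPeq ▸ inter_subset_left
    have hsub₂ : P ⊆ F₂ := hPeq ▸ inter_subset_right
    obtain ⟨a₁, ha₁F, ha₁P⟩ : ∃ a, a ∈ F₁ ∧ a ∉ P := by
      by_contra h; push_neg at h
      exact hne₁ (Subset.antisymm hsub₁ h)
    obtain ⟨a₂, ha₂F, ha₂P⟩ : ∃ a, a ∈ F₂ ∧ a ∉ P := by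
      by_contra h; push_neg at h
      exact hne₂ (Subset.antisymm hsub₂ h)
    -- the filter generated by P and any a ∉ P must meet I
    have key : ∀ a : A, a ∉ P → ∃ p ∈ P, ∃ c ∈ I, p ⊓ a ≤ c := by
      intro a haP
      set G : Set A := {x | ∃ p ∈ P, p ⊓ a ≤ x} with hG
      have hGfilt : IsFilt G := by
        refine ⟨?_, ?_, ?_⟩
        · rintro x y hxy ⟨p, hp, hpx⟩
          exact ⟨p, hp, hpx.trans hxy⟩
        · exact ⟨⊤, hPfilt.2.1, le_top⟩
        · rintro x y ⟨p, hp, hpx⟩ ⟨q, hq, hqy⟩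
          refine ⟨p ⊓ q, hPfilt.2.2 hp hq, le_inf ?_ ?_⟩
          · exact le_trans (inf_le_inf_right a inf_le_left) hpx
          · exact le_trans (inf_le_inf_right a inf_le_right) hqy
      have hPG : P ⊆ G := fun x hx => ⟨x, hx, inf_le_left⟩
      have haG : a ∈ G := ⟨⊤, hPfilt.2.1, inf_le_right⟩
      by_contra h
      push_neg at h
      have hGS : G ∈ S := by
        refine ⟨hGfilt, hFsub.trans hPG, ?_⟩
        rintro x ⟨p, hp, hpx⟩ hxI
        exact h p hp x hxI hpx
      exact haP (hPmax.2 hGS hPG haG)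
    obtain ⟨p₁, hp₁, c₁, hc₁, hle₁⟩ := key a₁ ha₁P
    obtain ⟨p₂, hp₂, c₂, hc₂, hle₂⟩ := key a₂ ha₂P
    obtain ⟨c, hcI, hc₁c, hc₂c⟩ := hI.2 c₁ hc₁ c₂ hc₂
    set p := p₁ ⊓ p₂ with hp
    have hpP : p ∈ P := hPfilt.2.2 hp₁ hp₂
    have h₁ : p ⊓ a₁ ≤ c :=
      le_trans (inf_le_inf_right a₁ inf_le_left) (hle₁.trans hc₁c)
    have h₂ : p ⊓ a₂ ≤ c :=
      le_trans (inf_le_inf_right a₂ inf_le_right) (hle₂.trans hc₂c)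
    obtain ⟨f', a', hpf', ha', hceq⟩ := hA p a₁ c h₁
    have h₂' : p ⊓ a₂ ≤ a' := h₂.trans (hceq ▸ inf_le_right)
    obtain ⟨f'', a'', hpf'', ha'', ha'eq⟩ := hA p a₂ a' h₂'
    have ha'F₂ : a' ∈ F₂ := by
      rw [ha'eq]
      exact hF₂.2.2 (hsub₂ (hPfilt.1 hpf'' hpP)) (hF₂.1 ha'' ha₂F)
    have ha'F₁ : a' ∈ F₁ := hF₁.1 ha' ha₁F
    have ha'P : a' ∈ P := hPeq ▸ ⟨ha'F₁, ha'F₂⟩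
    have hcP : c ∈ P := by
      rw [hceq]
      exact hPfilt.2.2 (hPfilt.1 hpf' hpP) ha'P
    exact hPdisj c hcP hcI

/-- Separation: if `a ≰ b` there is an irreducible filter containing `a`
but not `b`. -/
lemma spec_sep (hA : IsDistrib A) {a b : A} (h : ¬ a ≤ b) :
    ∃ P : Spec A, a ∈ P.1 ∧ b ∉ P.1 := by
  have hF : IsFilt {x : A | a ≤ x} :=
    ⟨fun x y hxy hx => le_trans hx hxy, le_top, fun x y hx hy => le_inf hx hy⟩
  have hI : IsOrdIdeal {x : A | x ≤ b} :=
    ⟨fun x y hyx hx => le_trans hyx hx, fun x hx y hy => ⟨b, le_rfl, hx, hy⟩⟩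
  obtain ⟨P, hirr, hFP, hdisj⟩ := prime_sep hA hF hI
    (fun x hx hx' => h (le_trans hx hx')) ⟨b, le_rfl⟩
  exact ⟨⟨P, hirr⟩, hFP le_rfl, fun hb => hdisj b hb le_rfl⟩

end Aux


theorem stmt14 {A : Type*} [SemilatticeInf A] [OrderTop A] (hA : IsDistrib A)
    (m : A → A) (hm : ∀ a b : A, a ≤ b → m a ≤ m b) :
    (m ⊤ = ⊤ ↔ ∀ P : Spec A, ¬ Rm m P (∅ : Set (Spec A))) ∧
    ((∀ a : A, m a ≤ a) ↔
      ∀ P : Spec A, Rm m P {Q : Spec A | Q.1 ⊆ P.1}) ∧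
    ((∀ a : A, a ≤ m a) ↔
      ∀ P : Spec A, ∀ Z : Set (Spec A), SBS Z → Rm m P Z → P ∈ Z) := by
  classical
  have upP : ∀ P : Spec A, IsUpperSet P.1 := fun P => P.2.1.1
  refine ⟨?_, ?_, ?_⟩
  · -- part 1
    constructor
    · intro htop P hRm
      have : (⊤ : A) ∈ {a : A | m a ∈ P.1} ∩ IA (∅ : Set (Spec A)) := by
        constructor
        · show m ⊤ ∈ P.1
          rw [htop]; exact P.2.1.2.1
        · show beta (⊤ : A) ∩ (∅ : Set (Spec A)) = ∅
          simp
      rw [hRm] at this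
      exact this
    · intro h
      refine le_antisymm le_top ?_
      by_contra hle
      obtain ⟨P, hTP, hmP⟩ := spec_sep hA hle
      apply h P
      rw [Rm, Set.eq_empty_iff_forall_notMem]
      rintro a ⟨haP, -⟩
      exact hmP (upP P (hm a ⊤ le_top) haP)
  · -- part 2
    constructor
    · intro h P
      rw [Rm, Set.eq_empty_iff_forall_notMem]
      rintro a ⟨haP, haI⟩
      have haP' : a ∈ P.1 := upP P (h a) haP
      have : P ∈ beta a ∩ {Q : Spec A | Q.1 ⊆ P.1} := ⟨haP', fun _ hx => hx⟩
      rw [show beta a ∩ {Q : Spec A | Q.1 ⊆ P.1} = ∅ from haI] at this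
      exact this
    · intro h a
      by_contra hle
      obtain ⟨P, hmaP, haP⟩ := spec_sep hA hle
      have hRm := h P
      rw [Rm, Set.eq_empty_iff_forall_notMem] at hRm
      have haI : a ∉ IA {Q : Spec A | Q.1 ⊆ P.1} := fun hI => hRm a ⟨hmaP, hI⟩
      rw [IA, mem_setOf_eq, ← ne_eq, ← nonempty_iff_ne_empty] at haI
      obtain ⟨Q, hQa, hQP⟩ := haI
      exact haP (hQP hQa)
  · -- part 3
    constructor
    · intro h P Z hZ hRm
      obtain ⟨L, -, hZeq⟩ := hZ
      rw [hZeq]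
      simp only [mem_iInter, mem_compl_iff]
      intro c hcL hcP
      rw [Rm, Set.eq_empty_iff_forall_notMem] at hRm
      have hmc : m c ∈ P.1 := upP P (h c) hcP
      have hcI : c ∉ IA Z := fun hI => hRm c ⟨hmc, hI⟩
      rw [IA, mem_setOf_eq, ← ne_eq, ← nonempty_iff_ne_empty] at hcI
      obtain ⟨Q, hQc, hQZ⟩ := hcI
      rw [hZeq] at hQZ
      simp only [mem_iInter, mem_compl_iff] at hQZ
      exact hQZ c hcL hQc
    · intro h a
      by_contra hle
      obtain ⟨P, haP, hmaP⟩ := spec_sep hA hle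
      have hSBS : SBS ((beta a)ᶜ : Set (Spec A)) := by
        refine ⟨{a}, ?_, by simp⟩
        intro x hx y hy
        rw [mem_singleton_iff] at hx hy
        exact ⟨a, rfl, by rw [hx, hy, union_self]⟩
      have hRm : Rm m P ((beta a)ᶜ : Set (Spec A)) := by
        rw [Rm, Set.eq_empty_iff_forall_notMem]
        rintro b ⟨hmbP, hbI⟩
        rw [IA, mem_setOf_eq, ← diff_eq, diff_eq_empty] at hbI
        -- beta b ⊆ beta a implies b ≤ a
        have hba : b ≤ a := by
          by_contra hba
          obtain ⟨Q, hbQ, haQ⟩ := spec_sep hA hba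
          exact haQ (hbI hbQ)
        exact hmaP (upP P (hm b a hba) hmbP)
      exact (h P _ hSBS hRm) haP
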